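/- Let N = (n_ij) ∈ SL(2,ℤ) have real eigenvalues α > 1 and 1/α (equivalently tr N > 2), and let p, q, r be integers with r ≠ 0. Then the center of G⁺_{N,p,q,r} is the infinite cyclic subgroup generated by g₃ (in particular g₃ has infinite order). -/

import Mathlib

namespace InoueAux

@[ext] structure Heis : Type where
  x : ℝ
  y : ℝ
  z : ℝ

namespace Heis

instance : Mul Heis := ⟨fun a b => ⟨a.x + b.x, a.y + b.y, a.z + b.z + a.x * b.y⟩⟩
instance : One Heis := ⟨⟨0, 0, 0⟩⟩
instance : Inv Heis := ⟨fun a => ⟨-a.x, -a.y, -a.z + a.x * a.y⟩⟩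

@[simp] lemma mul_def (a b : Heis) :
    a * b = ⟨a.x + b.x, a.y + b.y, a.z + b.z + a.x * b.y⟩ := rfl
@[simp] lemma one_def : (1 : Heis) = ⟨0, 0, 0⟩ := rfl
@[simp] lemma inv_def (a : Heis) : a⁻¹ = ⟨-a.x, -a.y, -a.z + a.x * a.y⟩ := rfl

instance : Group Heis where
  mul_assoc a b c := by ext <;> simp <;> ring
  one_mul a := by ext <;> simp
  mul_one a := by ext <;> simp
  inv_mul_cancel a := by ext <;> simp

lemma zpow_xz (ξ ζ : ℝ) : ∀ n : ℤ, (⟨ξ, 0, ζ⟩ : Heis) ^ n = ⟨n * ξ, 0, n * ζ⟩ := by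
  intro n
  induction n using Int.induction_on with
  | zero => ext <;> simp
  | succ k ih => rw [zpow_add_one, ih]; ext <;> push_cast <;> simp <;> ring
  | pred k ih => rw [zpow_sub_one, ih]; ext <;> push_cast <;> simp <;> ring

lemma zpow_yz (η ζ : ℝ) : ∀ n : ℤ, (⟨0, η, ζ⟩ : Heis) ^ n = ⟨0, n * η, n * ζ⟩ := by
  intro n
  induction n using Int.induction_on with
  | zero => ext <;> simp
  | succ k ih => rw [zpow_add_one, ih]; ext <;> push_cast <;> simp <;> ring
  | pred k ih => rw [zpow_sub_one, ih]; ext <;> push_cast <;> simp <;> ring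

end Heis

/-- quadratic correction term for the automorphism -/
noncomputable def mu (a b c d u v X Y : ℝ) : ℝ :=
  a * b * X ^ 2 / 2 + c * d * Y ^ 2 / 2 + b * c * X * Y + (a * b / 2 + u) * X + (c * d / 2 + v) * Y

/-- the automorphism of `Heis` with linear part `[[a,c],[b,d]]` -/
noncomputable def phi (a b c d u v : ℝ) (hdet : a * d - b * c = 1) : Heis ≃* Heis where
  toFun w := ⟨a * w.x + c * w.y, b * w.x + d * w.y, w.z + mu a b c d u v w.x w.y⟩
  invFun w := ⟨d * w.x - c * w.y, -b * w.x + a * w.y,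
    w.z - mu a b c d u v (d * w.x - c * w.y) (-b * w.x + a * w.y)⟩
  left_inv w := by
    have hx : d * (a * w.x + c * w.y) - c * (b * w.x + d * w.y) = w.x := by
      linear_combination w.x * hdet
    have hy : -b * (a * w.x + c * w.y) + a * (b * w.x + d * w.y) = w.y := by
      linear_combination w.y * hdet
    ext
    · exact hx
    · exact hy
    · show w.z + mu a b c d u v w.x w.y - mu a b c d u v _ _ = w.z
      rw [hx, hy]; ring
  right_inv w := by
    ext
    · show a * (d * w.x - c * w.y) + c * (-b * w.x + a * w.y) = w.x
      linear_combination w.x * hdet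
    · show b * (d * w.x - c * w.y) + d * (-b * w.x + a * w.y) = w.y
      linear_combination w.y * hdet
    · show (w.z - mu a b c d u v _ _) + mu a b c d u v _ _ = w.z
      ring
  map_mul' v₁ v₂ := by
    ext
    · show a * (v₁.x + v₂.x) + c * (v₁.y + v₂.y) = _ + _
      ring
    · show b * (v₁.x + v₂.x) + d * (v₁.y + v₂.y) = _ + _
      ring
    · show v₁.z + v₂.z + v₁.x * v₂.y + mu a b c d u v (v₁.x + v₂.x) (v₁.y + v₂.y) = _
      show _ = (Heis.mk _ _ _ * Heis.mk _ _ _).z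
      simp only [mu, Heis.mul_def]
      linear_combination -v₁.x * v₂.y * hdet



@[simp] lemma phi_apply (a b c d u v : ℝ) (hdet : a * d - b * c = 1) (w : Heis) :
    phi a b c d u v hdet w =
      ⟨a * w.x + c * w.y, b * w.x + d * w.y, w.z + mu a b c d u v w.x w.y⟩ := rfl

theorem key_normal_form {G : Type*} [Group G] (g0 g1 g2 g3 : G) (A00 A01 A10 A11 p q r : ℤ)
    (cz : ∀ x : G, g3 * x = x * g3)
    (hr1 : g0 * g1 * g0⁻¹ = g1 ^ A00 * g2 ^ A01 * g3 ^ p)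
    (hr2 : g0 * g2 * g0⁻¹ = g1 ^ A10 * g2 ^ A11 * g3 ^ q)
    (hr3 : g1 * g2 * g1⁻¹ * g2⁻¹ = g3 ^ r)
    (hdet : A00 * A11 - A01 * A10 = 1)
    (x : G) (hx : x ∈ Subgroup.closure {g0, g1, g2, g3}) :
    ∃ a b c d : ℤ, x = g0 ^ a * (g1 ^ b * (g2 ^ c * g3 ^ d)) := by
  -- centrality helpers
  have czp : ∀ (k : ℤ) (y : G), g3 ^ k * y = y * g3 ^ k := by
    intro k y
    have cm : Commute g3 y := cz y
    exact (cm.zpow_left k).eq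
  have cj3gen : ∀ (y : G) (e : ℤ), y * g3 ^ e * y⁻¹ = g3 ^ e := by
    intro y e
    rw [show y * g3 ^ e = g3 ^ e * y from (czp e y).symm]
    group
  have cj3gen' : ∀ (y : G) (e : ℤ), y⁻¹ * g3 ^ e * y = g3 ^ e := by
    intro y e
    have h := cj3gen y⁻¹ e
    rwa [inv_inv] at h
  -- basic swap relations
  have swap1 : g2 * g1 * g2⁻¹ = g1 * g3 ^ (-r) := by
    have h : g2 * g1 * g2⁻¹ * g1⁻¹ = g3 ^ (-r) := by
      rw [zpow_neg, ← hr3]; group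
    calc g2 * g1 * g2⁻¹ = g2 * g1 * g2⁻¹ * g1⁻¹ * g1 := by group
      _ = g3 ^ (-r) * g1 := by rw [h]
      _ = g1 * g3 ^ (-r) := czp (-r) g1
  have swap1inv : g2⁻¹ * g1 * g2 = g1 * g3 ^ r := by
    have h : g2 * (g1 * g3 ^ r) * g2⁻¹ = g1 := by
      rw [show g2 * (g1 * g3 ^ r) * g2⁻¹ = (g2 * g1 * g2⁻¹) * (g2 * g3 ^ r * g2⁻¹) from by group,
        swap1, cj3gen]
      group
    conv_lhs => rw [← h]
    group
  have swapc : ∀ c : ℤ, g2 ^ c * g1 * (g2 ^ c)⁻¹ = g1 * g3 ^ (-(r * c)) := by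
    intro c
    induction c using Int.induction_on with
    | zero => simp
    | succ k ih =>
        calc g2 ^ ((k : ℤ) + 1) * g1 * (g2 ^ ((k : ℤ) + 1))⁻¹
            = g2 ^ (k : ℤ) * (g2 * g1 * g2⁻¹) * (g2 ^ (k : ℤ))⁻¹ := by rw [zpow_add_one]; group
          _ = g2 ^ (k : ℤ) * (g1 * g3 ^ (-r)) * (g2 ^ (k : ℤ))⁻¹ := by rw [swap1]
          _ = (g2 ^ (k : ℤ) * g1 * (g2 ^ (k : ℤ))⁻¹) * (g2 ^ (k : ℤ) * g3 ^ (-r) * (g2 ^ (k : ℤ))⁻¹) := by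
              group
          _ = g1 * g3 ^ (-(r * k)) * g3 ^ (-r) := by rw [ih, cj3gen]
          _ = g1 * g3 ^ (-(r * ((k : ℤ) + 1))) := by
              rw [mul_assoc, ← zpow_add, show -(r * (k : ℤ)) + -r = -(r * ((k : ℤ) + 1)) from by ring]
    | pred k ih =>
        calc g2 ^ (-(k : ℤ) - 1) * g1 * (g2 ^ (-(k : ℤ) - 1))⁻¹
            = g2 ^ (-(k : ℤ)) * (g2⁻¹ * g1 * g2) * (g2 ^ (-(k : ℤ)))⁻¹ := by rw [zpow_sub_one]; group
          _ = g2 ^ (-(k : ℤ)) * (g1 * g3 ^ r) * (g2 ^ (-(k : ℤ)))⁻¹ := by rw [swap1inv]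
          _ = (g2 ^ (-(k : ℤ)) * g1 * (g2 ^ (-(k : ℤ)))⁻¹) * (g2 ^ (-(k : ℤ)) * g3 ^ r * (g2 ^ (-(k : ℤ)))⁻¹) := by
              group
          _ = g1 * g3 ^ (-(r * -(k : ℤ))) * g3 ^ r := by rw [ih, cj3gen]
          _ = g1 * g3 ^ (-(r * (-(k : ℤ) - 1))) := by
              rw [mul_assoc, ← zpow_add,
                show -(r * -(k : ℤ)) + r = -(r * (-(k : ℤ) - 1)) from by ring]
  have swapbc : ∀ c b : ℤ, g2 ^ c * g1 ^ b = g1 ^ b * g2 ^ c * g3 ^ (-(r * c * b)) := by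
    intro c b
    have cm0 : Commute g3 g1 := cz g1
    have cm : Commute g1 (g3 ^ (-(r * c))) := (cm0.zpow_left (-(r * c))).symm
    have hchain : g2 ^ c * g1 ^ b * (g2 ^ c)⁻¹ = g1 ^ b * g3 ^ (-(r * c) * b) := by
      calc g2 ^ c * g1 ^ b * (g2 ^ c)⁻¹ = (g2 ^ c * g1 * (g2 ^ c)⁻¹) ^ b := conj_zpow.symm
        _ = (g1 * g3 ^ (-(r * c))) ^ b := by rw [swapc]
        _ = g1 ^ b * (g3 ^ (-(r * c))) ^ b := cm.mul_zpow b
        _ = g1 ^ b * g3 ^ (-(r * c) * b) := by rw [← zpow_mul]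
    calc g2 ^ c * g1 ^ b = (g2 ^ c * g1 ^ b * (g2 ^ c)⁻¹) * g2 ^ c := by group
      _ = g1 ^ b * g3 ^ (-(r * c) * b) * g2 ^ c := by rw [hchain]
      _ = g1 ^ b * g2 ^ c * g3 ^ (-(r * c * b)) := by
          rw [mul_assoc, czp (-(r * c) * b) (g2 ^ c), ← mul_assoc,
            show -(r * c) * b = -(r * c * b) from by ring]
  -- rewriting system toward normal form  g1^b * (g2^c * g3^d)
  have move3_1 : ∀ (k b : ℤ) (y : G), g3 ^ k * (g1 ^ b * y) = g1 ^ b * (g3 ^ k * y) := by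
    intro k b y; rw [← mul_assoc, czp k (g1 ^ b), mul_assoc]
  have move3_2 : ∀ (k c : ℤ) (y : G), g3 ^ k * (g2 ^ c * y) = g2 ^ c * (g3 ^ k * y) := by
    intro k c y; rw [← mul_assoc, czp k (g2 ^ c), mul_assoc]
  have move3_1' : ∀ (k b : ℤ), g3 ^ k * g1 ^ b = g1 ^ b * g3 ^ k := fun k b => czp k (g1 ^ b)
  have move3_2' : ∀ (k c : ℤ), g3 ^ k * g2 ^ c = g2 ^ c * g3 ^ k := fun k c => czp k (g2 ^ c)
  have move21' : ∀ (c b : ℤ), g2 ^ c * g1 ^ b = g1 ^ b * (g2 ^ c * g3 ^ (-(r * c * b))) := by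
    intro c b; rw [swapbc, mul_assoc]
  have move21 : ∀ (c b : ℤ) (y : G),
      g2 ^ c * (g1 ^ b * y) = g1 ^ b * (g2 ^ c * (g3 ^ (-(r * c * b)) * y)) := by
    intro c b y; rw [← mul_assoc, move21']; simp only [mul_assoc]
  have col1 : ∀ (n m : ℤ) (y : G), g1 ^ n * (g1 ^ m * y) = g1 ^ (n + m) * y := by
    intro n m y; rw [← mul_assoc, ← zpow_add]
  have col2 : ∀ (n m : ℤ) (y : G), g2 ^ n * (g2 ^ m * y) = g2 ^ (n + m) * y := by
    intro n m y; rw [← mul_assoc, ← zpow_add]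
  have col3 : ∀ (n m : ℤ) (y : G), g3 ^ n * (g3 ^ m * y) = g3 ^ (n + m) * y := by
    intro n m y; rw [← mul_assoc, ← zpow_add]
  have col1' : ∀ (n m : ℤ), g1 ^ n * g1 ^ m = g1 ^ (n + m) := fun n m => (zpow_add g1 n m).symm
  have col2' : ∀ (n m : ℤ), g2 ^ n * g2 ^ m = g2 ^ (n + m) := fun n m => (zpow_add g2 n m).symm
  have col3' : ∀ (n m : ℤ), g3 ^ n * g3 ^ m = g3 ^ (n + m) := fun n m => (zpow_add g3 n m).symm
  have Pcongr : ∀ {B C D B' C' D' : ℤ}, B = B' → C = C' → D = D' →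
      g1 ^ B * (g2 ^ C * g3 ^ D) = g1 ^ B' * (g2 ^ C' * g3 ^ D') := by
    intro B C D B' C' D' h1 h2 h3; rw [h1, h2, h3]
  have Pz : ∀ {B C D : ℤ}, B = 0 → C = 0 → D = 0 → g1 ^ B * (g2 ^ C * g3 ^ D) = 1 := by
    intro B C D h1 h2 h3; rw [h1, h2, h3]; simp
  -- product of two normal forms
  have mulPP : ∀ b c d b' c' d' : ℤ,
      (g1 ^ b * (g2 ^ c * g3 ^ d)) * (g1 ^ b' * (g2 ^ c' * g3 ^ d')) =
        g1 ^ (b + b') * (g2 ^ (c + c') * g3 ^ (d + d' + -(r * c * b'))) := by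
    intro b c d b' c' d'
    conv_lhs => simp only [mul_assoc, move3_1, move3_2, move21, col1, col2, col3,
      move3_1', move3_2', move21', col1', col2', col3']
    exact Pcongr (by ring) (by ring) (by ring)
  have invPP : ∀ b c d : ℤ,
      (g1 ^ b * (g2 ^ c * g3 ^ d))⁻¹ = g1 ^ (-b) * (g2 ^ (-c) * g3 ^ (-d - r * c * b)) := by
    intro b c d
    apply inv_eq_of_mul_eq_one_right
    rw [mulPP]
    exact Pz (by ring) (by ring) (by ring)
  -- zpow of a normal form
  have powR : ∀ (X Y Z k : ℤ), ∃ W : ℤ,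
      (g1 ^ X * (g2 ^ Y * g3 ^ Z)) ^ k = g1 ^ (k * X) * (g2 ^ (k * Y) * g3 ^ W) := by
    intro X Y Z k
    induction k using Int.induction_on with
    | zero => exact ⟨0, by norm_num⟩
    | succ k ih =>
        obtain ⟨W, hW⟩ := ih
        refine ⟨W + Z + -(r * (k * Y) * X), ?_⟩
        rw [zpow_add_one, hW, mulPP]
        exact Pcongr (by ring) (by ring) (by ring)
    | pred k ih =>
        obtain ⟨W, hW⟩ := ih
        refine ⟨W + (-Z - r * Y * X) + -(r * (-(k : ℤ) * Y) * -X), ?_⟩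
        rw [zpow_sub_one, hW, invPP, mulPP]
        exact Pcongr (by ring) (by ring) (by ring)
  -- conjugation by g0
  have conjF : ∀ b c d : ℤ, ∃ d2 : ℤ,
      g0 * (g1 ^ b * (g2 ^ c * g3 ^ d)) * g0⁻¹ =
        g1 ^ (b * A00 + c * A10) * (g2 ^ (b * A01 + c * A11) * g3 ^ d2) := by
    intro b c d
    obtain ⟨W1, hW1⟩ := powR A00 A01 p b
    obtain ⟨W2, hW2⟩ := powR A10 A11 q c
    have e1 : g0 * g1 ^ b * g0⁻¹ = (g1 ^ A00 * (g2 ^ A01 * g3 ^ p)) ^ b := by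
      rw [← mul_assoc, ← hr1]; exact conj_zpow.symm
    have e2 : g0 * g2 ^ c * g0⁻¹ = (g1 ^ A10 * (g2 ^ A11 * g3 ^ q)) ^ c := by
      rw [← mul_assoc, ← hr2]; exact conj_zpow.symm
    have step : g0 * (g1 ^ b * (g2 ^ c * g3 ^ d)) * g0⁻¹ =
        (g1 ^ (b * A00) * (g2 ^ (b * A01) * g3 ^ W1)) *
          ((g1 ^ (c * A10) * (g2 ^ (c * A11) * g3 ^ W2)) * g3 ^ d) := by
      calc g0 * (g1 ^ b * (g2 ^ c * g3 ^ d)) * g0⁻¹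
          = (g0 * g1 ^ b * g0⁻¹) * ((g0 * g2 ^ c * g0⁻¹) * (g0 * g3 ^ d * g0⁻¹)) := by group
        _ = _ := by rw [e1, e2, hW1, hW2, cj3gen]
    refine ⟨W1 + W2 + d - r * (b * A01) * (c * A10), ?_⟩
    rw [step, show (g3 : G) ^ d = g1 ^ (0:ℤ) * (g2 ^ (0:ℤ) * g3 ^ d) from by simp, mulPP, mulPP]
    exact Pcongr (by ring) (by ring) (by ring)
  have conjB : ∀ b c d : ℤ, ∃ b2 c2 d2 : ℤ,
      g0 * (g1 ^ b * (g2 ^ c * g3 ^ d)) * g0⁻¹ = g1 ^ b2 * (g2 ^ c2 * g3 ^ d2) := by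
    intro b c d
    obtain ⟨d2, h⟩ := conjF b c d
    exact ⟨_, _, _, h⟩
  -- conjugation by g0⁻¹
  have conjB' : ∀ b c d : ℤ, ∃ b2 c2 d2 : ℤ,
      g0⁻¹ * (g1 ^ b * (g2 ^ c * g3 ^ d)) * g0 = g1 ^ b2 * (g2 ^ c2 * g3 ^ d2) := by
    intro b c d
    obtain ⟨e, he⟩ := conjF (b * A11 - c * A10) (-(b * A01) + c * A00) 0
    rw [show (b * A11 - c * A10) * A00 + (-(b * A01) + c * A00) * A10 = b from by
        linear_combination b * hdet,
      show (b * A11 - c * A10) * A01 + (-(b * A01) + c * A00) * A11 = c from by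
        linear_combination c * hdet] at he
    have hPXY : g0⁻¹ * (g1 ^ b * (g2 ^ c * g3 ^ e)) * g0 =
        g1 ^ (b * A11 - c * A10) * (g2 ^ (-(b * A01) + c * A00) * g3 ^ (0 : ℤ)) := by
      rw [← he]; group
    have h1 : g1 ^ b * (g2 ^ c * g3 ^ d) = (g1 ^ b * (g2 ^ c * g3 ^ e)) * g3 ^ (d - e) := by
      rw [show (g3 : G) ^ (d - e) = g1 ^ (0:ℤ) * (g2 ^ (0:ℤ) * g3 ^ (d - e)) from by simp, mulPP]
      exact Pcongr (by ring) (by ring) (by ring)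
    refine ⟨b * A11 - c * A10, -(b * A01) + c * A00, d - e, ?_⟩
    calc g0⁻¹ * (g1 ^ b * (g2 ^ c * g3 ^ d)) * g0
        = g0⁻¹ * ((g1 ^ b * (g2 ^ c * g3 ^ e)) * g3 ^ (d - e)) * g0 := by rw [← h1]
      _ = (g0⁻¹ * (g1 ^ b * (g2 ^ c * g3 ^ e)) * g0) * (g0⁻¹ * g3 ^ (d - e) * g0) := by group
      _ = (g1 ^ (b * A11 - c * A10) * (g2 ^ (-(b * A01) + c * A00) * g3 ^ (0 : ℤ))) * g3 ^ (d - e) := by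
          rw [hPXY, cj3gen']
      _ = _ := by
          conv_lhs => simp only [mul_assoc, move3_1, move3_2, move21, col1, col2, col3,
            move3_1', move3_2', move21', col1', col2', col3']
          exact Pcongr (by ring) (by ring) (by ring)
  -- conjugation by arbitrary power of g0
  have conjQ : ∀ n b c d : ℤ, ∃ b2 c2 d2 : ℤ,
      g0 ^ n * (g1 ^ b * (g2 ^ c * g3 ^ d)) * (g0 ^ n)⁻¹ = g1 ^ b2 * (g2 ^ c2 * g3 ^ d2) := by
    intro n
    induction n using Int.induction_on with
    | zero => intro b c d; exact ⟨b, c, d, by simp⟩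
    | succ k ih =>
        intro b c d
        obtain ⟨b2, c2, d2, h2⟩ := ih b c d
        obtain ⟨b3, c3, d3, h3⟩ := conjB b2 c2 d2
        refine ⟨b3, c3, d3, ?_⟩
        calc g0 ^ ((k : ℤ) + 1) * (g1 ^ b * (g2 ^ c * g3 ^ d)) * (g0 ^ ((k : ℤ) + 1))⁻¹
            = g0 * (g0 ^ (k : ℤ) * (g1 ^ b * (g2 ^ c * g3 ^ d)) * (g0 ^ (k : ℤ))⁻¹) * g0⁻¹ := by
              rw [zpow_add_one]; group
          _ = g0 * (g1 ^ b2 * (g2 ^ c2 * g3 ^ d2)) * g0⁻¹ := by rw [h2]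
          _ = _ := h3
    | pred k ih =>
        intro b c d
        obtain ⟨b2, c2, d2, h2⟩ := ih b c d
        obtain ⟨b3, c3, d3, h3⟩ := conjB' b2 c2 d2
        refine ⟨b3, c3, d3, ?_⟩
        calc g0 ^ (-(k : ℤ) - 1) * (g1 ^ b * (g2 ^ c * g3 ^ d)) * (g0 ^ (-(k : ℤ) - 1))⁻¹
            = g0⁻¹ * (g0 ^ (-(k : ℤ)) * (g1 ^ b * (g2 ^ c * g3 ^ d)) * (g0 ^ (-(k : ℤ)))⁻¹) * g0 := by
              rw [zpow_sub_one]; group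
          _ = g0⁻¹ * (g1 ^ b2 * (g2 ^ c2 * g3 ^ d2)) * g0 := by rw [h2]
          _ = _ := h3
  -- the subgroup of elements in normal form
  let S : Subgroup G :=
    { carrier := {y | ∃ a b c d : ℤ, y = g0 ^ a * (g1 ^ b * (g2 ^ c * g3 ^ d))}
      one_mem' := ⟨0, 0, 0, 0, by simp⟩
      mul_mem' := by
        rintro y1 y2 ⟨a, b, c, d, rfl⟩ ⟨a', b', c', d', rfl⟩
        obtain ⟨b2, c2, d2, h2⟩ := conjQ (-a') b c d
        have hswap : (g1 ^ b * (g2 ^ c * g3 ^ d)) * g0 ^ a' =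
            g0 ^ a' * (g1 ^ b2 * (g2 ^ c2 * g3 ^ d2)) := by
          rw [← h2, zpow_neg]; group
        refine ⟨a + a', b2 + b', c2 + c', d2 + d' + -(r * c2 * b'), ?_⟩
        calc g0 ^ a * (g1 ^ b * (g2 ^ c * g3 ^ d)) * (g0 ^ a' * (g1 ^ b' * (g2 ^ c' * g3 ^ d')))
            = g0 ^ a * ((g1 ^ b * (g2 ^ c * g3 ^ d)) * g0 ^ a') * (g1 ^ b' * (g2 ^ c' * g3 ^ d')) := by
              group
          _ = g0 ^ a * (g0 ^ a' * (g1 ^ b2 * (g2 ^ c2 * g3 ^ d2))) * (g1 ^ b' * (g2 ^ c' * g3 ^ d')) := by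
              rw [hswap]
          _ = g0 ^ (a + a') * ((g1 ^ b2 * (g2 ^ c2 * g3 ^ d2)) * (g1 ^ b' * (g2 ^ c' * g3 ^ d'))) := by
              rw [zpow_add]; group
          _ = _ := by rw [mulPP]
      inv_mem' := by
        rintro y ⟨a, b, c, d, rfl⟩
        obtain ⟨b2, c2, d2, h2⟩ := conjQ a (-b) (-c) (-d - r * c * b)
        refine ⟨-a, b2, c2, d2, ?_⟩
        calc (g0 ^ a * (g1 ^ b * (g2 ^ c * g3 ^ d)))⁻¹
            = (g1 ^ b * (g2 ^ c * g3 ^ d))⁻¹ * (g0 ^ a)⁻¹ := by group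
          _ = (g1 ^ (-b) * (g2 ^ (-c) * g3 ^ (-d - r * c * b))) * (g0 ^ a)⁻¹ := by rw [invPP]
          _ = g0 ^ (-a) * (g0 ^ a * (g1 ^ (-b) * (g2 ^ (-c) * g3 ^ (-d - r * c * b))) * (g0 ^ a)⁻¹) := by
              rw [zpow_neg]; group
          _ = _ := by rw [h2] }
  have hsub : ({g0, g1, g2, g3} : Set G) ⊆ S := by
    rintro y (rfl | rfl | rfl | rfl)
    · exact ⟨1, 0, 0, 0, by simp⟩
    · exact ⟨0, 1, 0, 0, by simp⟩
    · exact ⟨0, 0, 1, 0, by simp⟩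
    · exact ⟨0, 0, 0, 1, by simp⟩
  exact (Subgroup.closure_le S).mpr hsub hx


end InoueAux

open InoueAux SemidirectProduct

/-- The relations of the group `G⁺_{N,p,q,r}` attached to an Inoue surface of type `S⁺`:
generators `g₀,g₁,g₂,g₃` (indexed by `Fin 4`) and relations
`g₀g₁g₀⁻¹ = g₁^{n₁₁} g₂^{n₁₂} g₃^{p}`, `g₀g₂g₀⁻¹ = g₁^{n₂₁} g₂^{n₂₂} g₃^{q}`,
`g₁g₂g₁⁻¹g₂⁻¹ = g₃^{r}` and `g₃gᵢ = gᵢg₃` for `i = 0,1,2`. -/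
def gplusRels (N : Matrix (Fin 2) (Fin 2) ℤ) (p q r : ℤ) : Set (FreeGroup (Fin 4)) :=
  { FreeGroup.of 0 * FreeGroup.of 1 * (FreeGroup.of 0)⁻¹ *
      ((FreeGroup.of 1) ^ N 0 0 * (FreeGroup.of 2) ^ N 0 1 * (FreeGroup.of 3) ^ p)⁻¹,
    FreeGroup.of 0 * FreeGroup.of 2 * (FreeGroup.of 0)⁻¹ *
      ((FreeGroup.of 1) ^ N 1 0 * (FreeGroup.of 2) ^ N 1 1 * (FreeGroup.of 3) ^ q)⁻¹,
    FreeGroup.of 1 * FreeGroup.of 2 * (FreeGroup.of 1)⁻¹ * (FreeGroup.of 2)⁻¹ *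
      ((FreeGroup.of 3) ^ r)⁻¹,
    FreeGroup.of 3 * FreeGroup.of 0 * (FreeGroup.of 3)⁻¹ * (FreeGroup.of 0)⁻¹,
    FreeGroup.of 3 * FreeGroup.of 1 * (FreeGroup.of 3)⁻¹ * (FreeGroup.of 1)⁻¹,
    FreeGroup.of 3 * FreeGroup.of 2 * (FreeGroup.of 3)⁻¹ * (FreeGroup.of 2)⁻¹ }

/-- The group `G⁺_{N,p,q,r}`. -/
abbrev Gplus (N : Matrix (Fin 2) (Fin 2) ℤ) (p q r : ℤ) := PresentedGroup (gplusRels N p q r)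

/-- If `N ∈ SL(2,ℤ)` has real eigenvalues `α > 1` and `1/α` (equivalently `tr N > 2`)
and `r ≠ 0`, then the center of `G⁺_{N,p,q,r}` is the infinite cyclic subgroup
generated by `g₃`; in particular `g₃` has infinite order. -/
theorem stmt_1 (N : Matrix (Fin 2) (Fin 2) ℤ) (hN : N.det = 1)
    (hα : ∃ α : ℝ, 1 < α ∧ ((N 0 0 : ℝ) + (N 1 1 : ℝ)) = α + 1 / α)
    (p q r : ℤ) (hr : r ≠ 0) :
    Subgroup.center (Gplus N p q r) =
      Subgroup.zpowers (PresentedGroup.of 3 : Gplus N p q r) ∧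
    ¬ IsOfFinOrder (PresentedGroup.of 3 : Gplus N p q r) := by
  obtain ⟨α, hα1, hαtr⟩ := hα
  have hα0 : α ≠ 0 := by positivity
  have hdet : N 0 0 * N 1 1 - N 0 1 * N 1 0 = 1 := by
    rw [Matrix.det_fin_two] at hN; exact hN
  have hdetR : (N 0 0 : ℝ) * N 1 1 - (N 0 1 : ℝ) * N 1 0 = 1 := by exact_mod_cast hdet
  have hrR : (r : ℝ) ≠ 0 := Int.cast_ne_zero.mpr hr
  set g0 : Gplus N p q r := PresentedGroup.of 0 with hg0
  set g1 : Gplus N p q r := PresentedGroup.of 1 with hg1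
  set g2 : Gplus N p q r := PresentedGroup.of 2 with hg2
  set g3 : Gplus N p q r := PresentedGroup.of 3 with hg3
  have hmk : ∀ w ∈ gplusRels N p q r, PresentedGroup.mk (gplusRels N p q r) w = 1 := by
    intro w hw
    exact (QuotientGroup.eq_one_iff _).mpr (Subgroup.subset_normalClosure hw)
  have hofmk : ∀ i : Fin 4,
      PresentedGroup.mk (gplusRels N p q r) (FreeGroup.of i) = PresentedGroup.of i := fun _ => rfl
  have hw1 : (FreeGroup.of 0 * FreeGroup.of 1 * (FreeGroup.of 0)⁻¹ *
      ((FreeGroup.of 1 : FreeGroup (Fin 4)) ^ N 0 0 * (FreeGroup.of 2) ^ N 0 1 *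
        (FreeGroup.of 3) ^ p)⁻¹) ∈ gplusRels N p q r := by
    simp only [gplusRels, Set.mem_insert_iff, Set.mem_singleton_iff]; tauto
  have hw2 : (FreeGroup.of 0 * FreeGroup.of 2 * (FreeGroup.of 0)⁻¹ *
      ((FreeGroup.of 1 : FreeGroup (Fin 4)) ^ N 1 0 * (FreeGroup.of 2) ^ N 1 1 *
        (FreeGroup.of 3) ^ q)⁻¹) ∈ gplusRels N p q r := by
    simp only [gplusRels, Set.mem_insert_iff, Set.mem_singleton_iff]; tauto
  have hw3 : (FreeGroup.of 1 * FreeGroup.of 2 * (FreeGroup.of 1)⁻¹ * (FreeGroup.of 2)⁻¹ *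
      (((FreeGroup.of 3 : FreeGroup (Fin 4))) ^ r)⁻¹) ∈ gplusRels N p q r := by
    simp only [gplusRels, Set.mem_insert_iff, Set.mem_singleton_iff]; tauto
  have hw4 : ((FreeGroup.of 3 : FreeGroup (Fin 4)) * FreeGroup.of 0 * (FreeGroup.of 3)⁻¹ *
      (FreeGroup.of 0)⁻¹) ∈ gplusRels N p q r := by
    simp only [gplusRels, Set.mem_insert_iff, Set.mem_singleton_iff]; tauto
  have hw5 : ((FreeGroup.of 3 : FreeGroup (Fin 4)) * FreeGroup.of 1 * (FreeGroup.of 3)⁻¹ *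
      (FreeGroup.of 1)⁻¹) ∈ gplusRels N p q r := by
    simp only [gplusRels, Set.mem_insert_iff, Set.mem_singleton_iff]; tauto
  have hw6 : ((FreeGroup.of 3 : FreeGroup (Fin 4)) * FreeGroup.of 2 * (FreeGroup.of 3)⁻¹ *
      (FreeGroup.of 2)⁻¹) ∈ gplusRels N p q r := by
    simp only [gplusRels, Set.mem_insert_iff, Set.mem_singleton_iff]; tauto
  have hrel1 : g0 * g1 * g0⁻¹ = g1 ^ N 0 0 * g2 ^ N 0 1 * g3 ^ p := by
    have h := hmk _ hw1
    simp only [map_mul, map_inv, map_zpow, hofmk] at h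
    rwa [mul_inv_eq_one] at h
  have hrel2 : g0 * g2 * g0⁻¹ = g1 ^ N 1 0 * g2 ^ N 1 1 * g3 ^ q := by
    have h := hmk _ hw2
    simp only [map_mul, map_inv, map_zpow, hofmk] at h
    rwa [mul_inv_eq_one] at h
  have hrel3 : g1 * g2 * g1⁻¹ * g2⁻¹ = g3 ^ r := by
    have h := hmk _ hw3
    simp only [map_mul, map_inv, map_zpow, hofmk] at h
    rwa [mul_inv_eq_one] at h
  have hrel4 : g3 * g0 * g3⁻¹ * g0⁻¹ = 1 := by
    have h := hmk _ hw4
    simpa only [map_mul, map_inv, hofmk] using h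
  have hrel5 : g3 * g1 * g3⁻¹ * g1⁻¹ = 1 := by
    have h := hmk _ hw5
    simpa only [map_mul, map_inv, hofmk] using h
  have hrel6 : g3 * g2 * g3⁻¹ * g2⁻¹ = 1 := by
    have h := hmk _ hw6
    simpa only [map_mul, map_inv, hofmk] using h
  have hcz : ∀ x : Gplus N p q r, g3 * x = x * g3 := by
    intro x
    have hx : x ∈ Subgroup.centralizer {g3} := by
      refine PresentedGroup.generated_by _ _ ?_ x
      intro j
      rw [Subgroup.mem_centralizer_iff]
      intro y hy
      rw [Set.mem_singleton_iff] at hy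
      subst hy
      fin_cases j
      · rw [show g3 * g0 * g3⁻¹ * g0⁻¹ = (g3 * g0) * (g0 * g3)⁻¹ from by group,
          mul_inv_eq_one] at hrel4
        exact hrel4
      · rw [show g3 * g1 * g3⁻¹ * g1⁻¹ = (g3 * g1) * (g1 * g3)⁻¹ from by group,
          mul_inv_eq_one] at hrel5
        exact hrel5
      · rw [show g3 * g2 * g3⁻¹ * g2⁻¹ = (g3 * g2) * (g2 * g3)⁻¹ from by group,
          mul_inv_eq_one] at hrel6
        exact hrel6
      · rfl
    exact Subgroup.mem_centralizer_iff.mp hx g3 (Set.mem_singleton _)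
  have hgen : ∀ x : Gplus N p q r, x ∈ Subgroup.closure {g0, g1, g2, g3} := by
    intro x
    refine PresentedGroup.generated_by _ _ ?_ x
    intro j
    apply Subgroup.subset_closure
    fin_cases j <;> simp [hg0, hg1, hg2, hg3]
  -- the model homomorphism into Heis ⋊ Aut(Heis)
  set Φ : Heis ≃* Heis :=
    phi (N 0 0) (N 0 1) (N 1 0) (N 1 1) ((p : ℝ)/r) ((q : ℝ)/r) hdetR with hΦdef
  set h1 : Heis := ⟨1, 0, 0⟩ with hh1
  set h2 : Heis := ⟨0, 1, 0⟩ with hh2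
  set h3 : Heis := ⟨0, 0, (r : ℝ)⁻¹⟩ with hh3
  let f : Fin 4 → Heis ⋊[MonoidHom.id (MulAut Heis)] MulAut Heis := ![inr Φ, inl h1, inl h2, inl h3]
  have hf0 : f 0 = inr Φ := rfl
  have hf1 : f 1 = inl h1 := rfl
  have hf2 : f 2 = inl h2 := rfl
  have hf3 : f 3 = inl h3 := rfl
  have hΦ3 : Φ h3 = h3 := by
    ext <;> simp [hΦdef, hh3, mu]
  have conjinl : ∀ n : Heis,
      (inr Φ * inl n * (inr Φ)⁻¹ : Heis ⋊[MonoidHom.id (MulAut Heis)] MulAut Heis) = inl (Φ n) := by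
    intro n
    rw [show ((inr Φ)⁻¹ : Heis ⋊[MonoidHom.id (MulAut Heis)] MulAut Heis) = inr Φ⁻¹ from
      (map_inv _ _).symm]
    exact (SemidirectProduct.inl_aut (φ := MonoidHom.id (MulAut Heis)) Φ n).symm
  have hlift : ∀ w ∈ gplusRels N p q r, FreeGroup.lift f w = 1 := by
    intro w hw
    simp only [gplusRels, Set.mem_insert_iff, Set.mem_singleton_iff] at hw
    rcases hw with rfl | rfl | rfl | rfl | rfl | rfl
    · simp only [map_mul, map_inv, map_zpow, FreeGroup.lift_apply_of, hf0, hf1, hf2, hf3]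
      rw [mul_inv_eq_one, conjinl, ← map_zpow, ← map_zpow, ← map_zpow, ← map_mul, ← map_mul]
      congr 1
      rw [hh1, hh2, hh3, Heis.zpow_xz, Heis.zpow_yz, Heis.zpow_yz]
      ext <;> simp [hΦdef, mu] <;> ring
    · simp only [map_mul, map_inv, map_zpow, FreeGroup.lift_apply_of, hf0, hf1, hf2, hf3]
      rw [mul_inv_eq_one, conjinl, ← map_zpow, ← map_zpow, ← map_zpow, ← map_mul, ← map_mul]
      congr 1
      rw [hh1, hh2, hh3, Heis.zpow_xz, Heis.zpow_yz, Heis.zpow_yz]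
      ext <;> simp [hΦdef, mu] <;> ring
    · simp only [map_mul, map_inv, map_zpow, FreeGroup.lift_apply_of, hf1, hf2, hf3]
      rw [mul_inv_eq_one, ← map_zpow, ← map_inv, ← map_inv, ← map_mul, ← map_mul, ← map_mul]
      congr 1
      rw [hh1, hh2, hh3, Heis.zpow_yz]
      ext <;> simp <;> field_simp
    · simp only [map_mul, map_inv, FreeGroup.lift_apply_of, hf0, hf3]
      have hsw : (inl h3 * inr Φ : Heis ⋊[MonoidHom.id (MulAut Heis)] MulAut Heis) =
          inr Φ * inl h3 := by
        have c1 : (inr Φ * inl h3 * (inr Φ)⁻¹ : Heis ⋊[MonoidHom.id (MulAut Heis)] MulAut Heis) =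
            inl h3 := by rw [conjinl, hΦ3]
        conv_lhs => rw [← c1]
        group
      rw [hsw]; group
    · simp only [map_mul, map_inv, FreeGroup.lift_apply_of, hf1, hf3]
      rw [← map_inv, ← map_inv, ← map_mul, ← map_mul, ← map_mul,
        show (1 : Heis ⋊[MonoidHom.id (MulAut Heis)] MulAut Heis) = inl 1 from (map_one _).symm]
      congr 1
      rw [hh1, hh3]
      ext <;> simp
    · simp only [map_mul, map_inv, FreeGroup.lift_apply_of, hf2, hf3]
      rw [← map_inv, ← map_inv, ← map_mul, ← map_mul, ← map_mul,
        show (1 : Heis ⋊[MonoidHom.id (MulAut Heis)] MulAut Heis) = inl 1 from (map_one _).symm]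
      congr 1
      rw [hh2, hh3]
      ext <;> simp
  set ψ := PresentedGroup.toGroup hlift with hψdef
  have hψ0 : ψ g0 = inr Φ := PresentedGroup.toGroup.of hlift
  have hψ1 : ψ g1 = inl h1 := PresentedGroup.toGroup.of hlift
  have hψ2 : ψ g2 = inl h2 := PresentedGroup.toGroup.of hlift
  have hψ3 : ψ g3 = inl h3 := PresentedGroup.toGroup.of hlift
  set F : Heis → ℝ := fun w => (N 0 1 : ℝ) * w.x + (α - N 0 0) * w.y with hFdef
  have hchar : α * ((N 0 0 : ℝ) + N 1 1) = α ^ 2 + 1 := by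
    rw [hαtr]; field_simp
  have hFmul : ∀ v w : Heis, F (v * w) = F v + F w := by
    intro v w; simp [hFdef, Heis.mul_def]; ring
  have hFphi : ∀ w : Heis, F (Φ w) = α * F w := by
    intro w
    simp only [hFdef, hΦdef, phi_apply]
    linear_combination w.y * hchar - w.y * hdetR
  have hFphiInv : ∀ w : Heis, F (Φ.symm w) = F w / α := by
    intro w
    have h := hFphi (Φ.symm w)
    rw [MulEquiv.apply_symm_apply] at h
    rw [eq_div_iff hα0]
    linear_combination -h
  have hFzpow : ∀ (n : ℤ) (w : Heis), F ((Φ ^ n : MulAut Heis) w) = α ^ n * F w := by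
    intro n
    induction n using Int.induction_on with
    | zero => intro w; simp
    | succ k ih =>
        intro w
        rw [zpow_add_one, MulAut.mul_apply, ih, hFphi, zpow_add_one₀ hα0]
        ring
    | pred k ih =>
        intro w
        rw [zpow_sub_one, MulAut.mul_apply, MulAut.inv_def, ih, hFphiInv, zpow_sub_one₀ hα0]
        ring
  constructor
  · -- the center is exactly the powers of g3
    apply le_antisymm
    · intro g hg
      rw [Subgroup.mem_center_iff] at hg
      obtain ⟨a, b, c, d, rfl⟩ :=
        key_normal_form g0 g1 g2 g3 (N 0 0) (N 0 1) (N 1 0) (N 1 1) p q r hcz hrel1 hrel2 hrel3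
          hdet g (hgen g)
      set u : Heis := h1 ^ b * (h2 ^ c * h3 ^ d) with hudef
      have hψg : ψ (g0 ^ a * (g1 ^ b * (g2 ^ c * g3 ^ d))) = inr (Φ ^ a) * inl u := by
        simp only [map_mul, map_zpow, hψ0, hψ1, hψ2, hψ3, hudef]
      have key1 : ∀ (gi : Gplus N p q r) (hi : Heis), ψ gi = inl hi →
          hi * (Φ ^ a : MulAut Heis) u = (Φ ^ a : MulAut Heis) u * (Φ ^ a : MulAut Heis) hi := by
        intro gi hi hψi
        have h := hg gi
        have h2 : ψ gi * ψ (g0 ^ a * (g1 ^ b * (g2 ^ c * g3 ^ d))) =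
            ψ (g0 ^ a * (g1 ^ b * (g2 ^ c * g3 ^ d))) * ψ gi := by
          rw [← map_mul, ← map_mul, h]
        rw [hψg, hψi] at h2
        have h3 := congrArg SemidirectProduct.left h2
        simpa only [SemidirectProduct.mul_left, SemidirectProduct.left_inl,
          SemidirectProduct.right_inl, SemidirectProduct.left_inr, SemidirectProduct.right_inr,
          SemidirectProduct.mul_right,
          MonoidHom.id_apply, MulAut.one_apply, map_one, one_mul, mul_one] using h3
      have ha : a = 0 := by
        by_contra ha
        have h1ne : α ^ a ≠ 1 := by
          intro heq
          rcases lt_or_gt_of_ne ha with h | h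
          · have h2 : (1:ℝ) < α ^ (-a) := one_lt_zpow₀ hα1 (by linarith)
            rw [zpow_neg, heq] at h2
            norm_num at h2
          · have h2 : (1:ℝ) < α ^ a := one_lt_zpow₀ hα1 h
            rw [heq] at h2
            norm_num at h2
        have e1 := key1 g1 h1 hψ1
        have e2 := key1 g2 h2 hψ2
        have hF1 := congrArg F e1
        have hF2 := congrArg F e2
        rw [hFmul, hFmul, hFzpow, hFzpow] at hF1 hF2
        have hFh1 : F h1 = (N 0 1 : ℝ) := by simp [hFdef, hh1]
        have hFh2 : F h2 = α - N 0 0 := by simp [hFdef, hh2]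
        have hu1 : (N 0 1 : ℝ) = 0 := by
          have hz : (α ^ a - 1) * F h1 = 0 := by linear_combination -hF1
          rcases mul_eq_zero.mp hz with h | h
          · exact absurd (by linarith : α ^ a = 1) h1ne
          · rw [hFh1] at h; exact h
        have hu2 : α = (N 0 0 : ℝ) := by
          have hz : (α ^ a - 1) * F h2 = 0 := by linear_combination -hF2
          rcases mul_eq_zero.mp hz with h | h
          · exact absurd (by linarith : α ^ a = 1) h1ne
          · rw [hFh2] at h; linarith
        have hN01 : N 0 1 = 0 := by exact_mod_cast hu1
        have hunit : N 0 0 * N 1 1 = 1 := by rw [hN01] at hdet; linarith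
        rcases Int.isUnit_iff.mp (IsUnit.of_mul_eq_one _ hunit) with h | h
        · rw [h] at hu2; push_cast at hu2; linarith
        · rw [h] at hu2; push_cast at hu2; linarith
      subst ha
      have h := hg g0
      have h2 : ψ g0 * ψ (g0 ^ (0:ℤ) * (g1 ^ b * (g2 ^ c * g3 ^ d))) =
          ψ (g0 ^ (0:ℤ) * (g1 ^ b * (g2 ^ c * g3 ^ d))) * ψ g0 := by
        rw [← map_mul, ← map_mul, h]
      rw [hψg, hψ0] at h2
      have h3 := congrArg SemidirectProduct.left h2
      simp only [zpow_zero, SemidirectProduct.mul_left, SemidirectProduct.left_inr,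
        SemidirectProduct.right_inr, SemidirectProduct.left_inl, SemidirectProduct.right_inl,
        MonoidHom.id_apply, map_one, one_mul, mul_one, MulAut.one_apply] at h3
      have hu : u = ⟨(b : ℝ), (c : ℝ), (d : ℝ) * (r : ℝ)⁻¹ + b * c⟩ := by
        rw [hudef, hh1, hh2, hh3, Heis.zpow_xz, Heis.zpow_yz, Heis.zpow_yz]
        ext <;> simp
      rw [hu] at h3
      have hxc := congrArg Heis.x h3
      have hyc := congrArg Heis.y h3
      simp only [hΦdef, phi_apply] at hxc hyc
      have htr2 : (2:ℝ) < (N 0 0 : ℝ) + N 1 1 := by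
        rw [hαtr]
        have e : α + 1/α - 2 = (α-1)^2/α := by field_simp; ring
        have hpos : 0 < (α-1)^2/α := div_pos (pow_pos (by linarith) 2) (by linarith)
        linarith
      have hfac : ((N 0 0:ℝ) - 1) * ((N 1 1:ℝ) - 1) - (N 1 0:ℝ) * (N 0 1:ℝ) =
          2 - ((N 0 0:ℝ) + N 1 1) := by linear_combination hdetR
      have hfne : ((N 0 0:ℝ) - 1) * ((N 1 1:ℝ) - 1) - (N 1 0:ℝ) * (N 0 1:ℝ) ≠ 0 := by
        rw [hfac]; linarith
      have hbR : (b : ℝ) = 0 := by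
        have key : (((N 0 0:ℝ) - 1) * ((N 1 1:ℝ) - 1) - (N 1 0:ℝ) * (N 0 1:ℝ)) * b = 0 := by
          linear_combination ((N 1 1:ℝ) - 1) * hxc - (N 1 0:ℝ) * hyc
        rcases mul_eq_zero.mp key with h' | h'
        · exact absurd h' hfne
        · exact h'
      have hcR : (c : ℝ) = 0 := by
        have key : (((N 0 0:ℝ) - 1) * ((N 1 1:ℝ) - 1) - (N 1 0:ℝ) * (N 0 1:ℝ)) * c = 0 := by
          linear_combination ((N 0 0:ℝ) - 1) * hyc - (N 0 1:ℝ) * hxc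
        rcases mul_eq_zero.mp key with h' | h'
        · exact absurd h' hfne
        · exact h'
      have hb : b = 0 := by exact_mod_cast hbR
      have hc : c = 0 := by exact_mod_cast hcR
      subst hb; subst hc
      simpa using Subgroup.zpow_mem_zpowers g3 d
    · rw [Subgroup.zpowers_le, Subgroup.mem_center_iff]
      intro y
      exact (hcz y).symm
  · -- g3 has infinite order
    intro hfin
    obtain ⟨n, hn, hpow⟩ := isOfFinOrder_iff_pow_eq_one.mp hfin
    have h := congrArg ψ hpow
    rw [map_pow, hψ3, map_one, ← map_pow,
      show (1 : Heis ⋊[MonoidHom.id (MulAut Heis)] MulAut Heis) = inl 1 from (map_one _).symm] at h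
    have h2 : h3 ^ n = 1 := SemidirectProduct.inl_injective h
    have h3z : h3 ^ (n : ℤ) = 1 := by rw [zpow_natCast]; exact h2
    rw [hh3, Heis.zpow_yz] at h3z
    have hz := congrArg Heis.z h3z
    simp only [Heis.one_def] at hz
    rcases mul_eq_zero.mp hz with h' | h'
    · have : (n : ℤ) = 0 := by exact_mod_cast h'
      omega
    · exact absurd h' (by simpa using hrR)
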